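/- For all real constants b > 0 and s > 0, the improper integral ∫₀^∞ dr/√(b²r⁴ + s²) converges and equals Γ(1/4)·Γ(5/4)/√(π·b·s), where Γ is the Gamma function. -/

import Mathlib

open Real MeasureTheory Set

lemma beta_quarter :
    ∫ t in Ioo (0:ℝ) 1, t ^ (-3/4 : ℝ) * (1 - t) ^ (-3/4 : ℝ)
      = Real.Gamma (1/4) ^ 2 / Real.sqrt Real.pi := by
  have hβ : Complex.betaIntegral (1/4) (1/4)
      = ((∫ t in (0:ℝ)..1, t ^ (-3/4 : ℝ) * (1 - t) ^ (-3/4 : ℝ) : ℝ) : ℂ) := by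
    rw [Complex.betaIntegral, ← intervalIntegral.integral_ofReal]
    apply intervalIntegral.integral_congr
    intro x hx
    rw [uIcc_of_le zero_le_one] at hx
    have h1 : (0:ℝ) ≤ x := hx.1
    have h2 : (0:ℝ) ≤ 1 - x := by linarith [hx.2]
    push_cast
    rw [Complex.ofReal_cpow h1, Complex.ofReal_cpow h2]
    norm_num
  have h := Complex.Gamma_mul_Gamma_eq_betaIntegral
    (s := (1/4 : ℂ)) (t := (1/4 : ℂ)) (by norm_num) (by norm_num)
  rw [hβ, show (1/4 + 1/4 : ℂ) = ((1/2 : ℝ) : ℂ) by norm_num,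
    show (1/4 : ℂ) = ((1/4 : ℝ) : ℂ) by norm_num,
    Complex.Gamma_ofReal, Complex.Gamma_ofReal] at h
  have h' : Real.Gamma (1/4) * Real.Gamma (1/4)
      = Real.Gamma (1/2) * ∫ t in (0:ℝ)..1, t ^ (-3/4 : ℝ) * (1 - t) ^ (-3/4 : ℝ) := by
    exact_mod_cast h
  have hint : (∫ t in (0:ℝ)..1, t ^ (-3/4 : ℝ) * (1 - t) ^ (-3/4 : ℝ))
      = ∫ t in Ioo (0:ℝ) 1, t ^ (-3/4 : ℝ) * (1 - t) ^ (-3/4 : ℝ) := by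
    rw [intervalIntegral.integral_of_le zero_le_one, integral_Ioc_eq_integral_Ioo]
  rw [Real.Gamma_one_half_eq, hint] at h'
  have hπ : Real.sqrt Real.pi ≠ 0 := by positivity
  field_simp
  rw [sq, h']; ring

lemma mobius_subst :
    ∫ x in Ioi (0:ℝ), x ^ (-3/4 : ℝ) * (1 + x) ^ (-(1/2) : ℝ)
      = ∫ t in Ioo (0:ℝ) 1, t ^ (-3/4 : ℝ) * (1 - t) ^ (-3/4 : ℝ) := by
  set g : ℝ → ℝ := fun x => x ^ (-3/4 : ℝ) * (1 + x) ^ (-(1/2) : ℝ) with hg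
  have hf' : ∀ t ∈ Ioo (0:ℝ) 1,
      HasDerivWithinAt (fun t : ℝ => t / (1 - t)) (((1 - t) ^ 2)⁻¹) (Ioo 0 1) t := by
    intro t ht
    have h1 : (1:ℝ) - t ≠ 0 := ne_of_gt (by linarith [ht.2])
    have : HasDerivAt (fun t : ℝ => t / (1 - t))
        ((1 * (1 - t) - t * (0 - 1)) / (1 - t) ^ 2) t :=
      (hasDerivAt_id t).div ((hasDerivAt_const t 1).sub (hasDerivAt_id t)) h1
    rw [show ((1 - t) ^ 2)⁻¹ = (1 * (1 - t) - t * (0 - 1)) / (1 - t) ^ 2 by ring]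
    exact this.hasDerivWithinAt
  have hinj : InjOn (fun t : ℝ => t / (1 - t)) (Ioo 0 1) := by
    intro a ha b hb hab
    have h1 : (1:ℝ) - a ≠ 0 := by have := ha.2; intro h; linarith [sub_eq_zero.mp h]
    have h2 : (1:ℝ) - b ≠ 0 := by have := hb.2; intro h; linarith [sub_eq_zero.mp h]
    field_simp at hab
    nlinarith [hab]
  have himg : (fun t : ℝ => t / (1 - t)) '' Ioo 0 1 = Ioi 0 := by
    ext y
    constructor
    · rintro ⟨t, ht, rfl⟩
      exact div_pos ht.1 (by linarith [ht.2])
    · intro hy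
      refine ⟨y / (1 + y), ⟨div_pos hy (by linarith [mem_Ioi.mp hy]), ?_⟩, ?_⟩
      · rw [div_lt_one (by linarith [mem_Ioi.mp hy])]; linarith [mem_Ioi.mp hy]
      · have h1 : (1:ℝ) + y ≠ 0 := by have := mem_Ioi.mp hy; positivity
        field_simp
        ring
  have key := integral_image_eq_integral_abs_deriv_smul measurableSet_Ioo hf' hinj g
  rw [himg] at key
  rw [key]
  apply setIntegral_congr_fun measurableSet_Ioo
  intro t ht
  have ht0 : 0 < t := ht.1
  have ha : 0 < 1 - t := by linarith [ht.2]
  have h1 : 1 + t / (1 - t) = (1 - t)⁻¹ := by field_simp; ring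
  simp only [hg, smul_eq_mul, h1]
  rw [Real.div_rpow ht0.le ha.le, Real.inv_rpow ha.le, ← Real.rpow_neg ha.le]
  rw [abs_of_pos (by positivity : (0:ℝ) < ((1 - t) ^ 2)⁻¹)]
  rw [show ((1 - t) ^ 2)⁻¹ = (1 - t) ^ (-2 : ℝ) by
    rw [Real.rpow_neg ha.le, Real.rpow_two]]
  rw [div_eq_mul_inv, ← Real.rpow_neg ha.le]
  rw [mul_comm ((1-t) ^ (-2:ℝ)), mul_assoc, mul_assoc, ← Real.rpow_add ha, ← Real.rpow_add ha]
  norm_num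

lemma J_eq : ∫ x in Ioi (0:ℝ), 1 / Real.sqrt (1 + x ^ 4)
    = Real.Gamma (1/4) ^ 2 / (4 * Real.sqrt Real.pi) := by
  have e2 := integral_comp_rpow_Ioi_of_pos
    (g := fun x : ℝ => (1/4) * (x ^ (-3/4 : ℝ) * (1 + x) ^ (-(1/2) : ℝ)))
    (p := 4) (by norm_num)
  have lhs_eq : (∫ x in Ioi (0:ℝ), ((4:ℝ) * x ^ ((4:ℝ) - 1)) •
      ((1/4) * ((x ^ (4:ℝ)) ^ (-3/4 : ℝ) * (1 + x ^ (4:ℝ)) ^ (-(1/2) : ℝ))))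
      = ∫ x in Ioi (0:ℝ), 1 / Real.sqrt (1 + x ^ 4) := by
    apply setIntegral_congr_fun measurableSet_Ioi
    intro x hx
    have hx0 : 0 < x := hx
    have h14 : 0 < 1 + x ^ 4 := by positivity
    have hpow : (x ^ (4:ℝ)) ^ (-3/4 : ℝ) = x ^ (-3 : ℝ) := by
      rw [← Real.rpow_mul hx0.le]; norm_num
    have hx4 : x ^ (4:ℝ) = x ^ (4:ℕ) := by
      rw [show ((4:ℝ)) = ((4:ℕ):ℝ) by norm_num, Real.rpow_natCast]
    have hsq : (1 + x ^ (4:ℕ)) ^ (-(1/2) : ℝ) = 1 / Real.sqrt (1 + x ^ 4) := by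
      rw [Real.rpow_neg h14.le, Real.sqrt_eq_rpow]; exact (one_div _).symm
    have hpow' : (x ^ (4:ℕ)) ^ (-3/4 : ℝ) = x ^ (-3 : ℝ) := by
      rw [← hx4]; exact hpow
    have h3 : x ^ ((4:ℝ)-1) * x ^ (-3:ℝ) = 1 := by
      rw [← Real.rpow_add hx0]; norm_num
    simp only [smul_eq_mul, hx4, hpow', hsq]
    calc (4 * x ^ ((4:ℝ)-1)) * ((1/4) * (x ^ (-3:ℝ) * (1 / Real.sqrt (1+x^4))))
        = (x ^ ((4:ℝ)-1) * x ^ (-3:ℝ)) * (1 / Real.sqrt (1+x^4)) := by ring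
      _ = 1 / Real.sqrt (1+x^4) := by rw [h3, one_mul]
  rw [lhs_eq] at e2
  rw [e2, MeasureTheory.integral_const_mul, mobius_subst, beta_quarter]
  ring

/-- For all `b > 0` and `s > 0`, the improper integral
`∫₀^∞ dr/√(b²r⁴ + s²)` converges and equals `Γ(1/4)·Γ(5/4)/√(π b s)`. -/
theorem integral_one_div_sqrt_quartic :
    ∀ b s : ℝ, 0 < b → 0 < s →
      IntegrableOn (fun r : ℝ => 1 / Real.sqrt (b ^ 2 * r ^ 4 + s ^ 2)) (Ioi 0) ∧
      ∫ r in Ioi (0:ℝ), 1 / Real.sqrt (b ^ 2 * r ^ 4 + s ^ 2)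
        = Real.Gamma (1/4) * Real.Gamma (5/4) / Real.sqrt (Real.pi * b * s) := by
  intro b s hb hs
  set f : ℝ → ℝ := fun r => 1 / Real.sqrt (b ^ 2 * r ^ 4 + s ^ 2) with hf
  have hpos : ∀ r : ℝ, 0 < b ^ 2 * r ^ 4 + s ^ 2 := fun r => by positivity
  have hcont : Continuous f := by
    apply Continuous.div continuous_const
    · exact (Real.continuous_sqrt.comp (by continuity))
    · intro r; exact (Real.sqrt_pos.mpr (hpos r)).ne'
  constructor
  · -- integrability
    have h1 : IntegrableOn f (Ioc 0 1) := hcont.integrableOn_Ioc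
    have h2 : IntegrableOn f (Ioi 1) := by
      have hg : IntegrableOn (fun r : ℝ => b⁻¹ * r ^ (-2 : ℝ)) (Ioi 1) :=
        (integrableOn_Ioi_rpow_of_lt (by norm_num) one_pos).const_mul b⁻¹
      apply Integrable.mono' hg (hcont.aestronglyMeasurable.restrict)
      rw [ae_restrict_iff' measurableSet_Ioi]
      filter_upwards with r hr
      have hr1 : (1:ℝ) < r := hr
      have hr0 : 0 < r := lt_trans one_pos hr1
      have hbr : 0 < b * r ^ 2 := by positivity
      have hle : b * r ^ 2 ≤ Real.sqrt (b ^ 2 * r ^ 4 + s ^ 2) := by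
        rw [show b ^ 2 * r ^ 4 + s ^ 2 = (b * r ^ 2) ^ 2 + s ^ 2 by ring]
        calc b * r ^ 2 = Real.sqrt ((b * r ^ 2) ^ 2) := (Real.sqrt_sq hbr.le).symm
          _ ≤ _ := Real.sqrt_le_sqrt (by nlinarith [sq_nonneg s])
      have : ‖f r‖ = f r := by
        rw [Real.norm_eq_abs, abs_of_nonneg]; positivity
      rw [this]
      calc f r ≤ 1 / (b * r ^ 2) := by
            apply one_div_le_one_div_of_le hbr hle
        _ = b⁻¹ * r ^ (-2 : ℝ) := by
            rw [Real.rpow_neg hr0.le, Real.rpow_two]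
            field_simp
    have := h1.union h2
    rwa [Ioc_union_Ioi_eq_Ioi zero_le_one] at this
  · -- value
    set c : ℝ := Real.sqrt (s / b) with hc
    have hc0 : 0 < c := Real.sqrt_pos.mpr (div_pos hs hb)
    have hcs : b ^ 2 * c ^ 4 = s ^ 2 := by
      have : c ^ 2 = s / b := Real.sq_sqrt (div_pos hs hb).le
      have h4 : c ^ 4 = (s / b) ^ 2 := by rw [show c ^ 4 = (c ^ 2) ^ 2 by ring, this]
      rw [h4]; field_simp
    have e1 : (∫ x in Ioi (0:ℝ), f (c * x)) = c⁻¹ • ∫ x in Ioi (c * 0), f x :=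
      integral_comp_mul_left_Ioi f 0 hc0
    have e1' : (∫ x in Ioi (0:ℝ), f (c * x))
        = s⁻¹ * ∫ x in Ioi (0:ℝ), 1 / Real.sqrt (1 + x ^ 4) := by
      rw [← MeasureTheory.integral_const_mul]
      apply setIntegral_congr_fun measurableSet_Ioi
      intro x hx
      have : b ^ 2 * (c * x) ^ 4 + s ^ 2 = s ^ 2 * (1 + x ^ 4) := by
        have : b ^ 2 * (c * x) ^ 4 = s ^ 2 * x ^ 4 := by
          rw [show (c * x) ^ 4 = c ^ 4 * x ^ 4 by ring, ← mul_assoc, hcs]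
        rw [this]; ring
      simp only [hf, this, Real.sqrt_mul (sq_nonneg s), Real.sqrt_sq hs.le]
      rw [one_div, mul_inv]
      ring
    have hval : (∫ r in Ioi (0:ℝ), f r)
        = c * (s⁻¹ * ∫ x in Ioi (0:ℝ), 1 / Real.sqrt (1 + x ^ 4)) := by
      rw [← e1', e1]
      simp [smul_eq_mul, mul_comm]
      rw [← mul_assoc, mul_inv_cancel₀ hc0.ne', one_mul]
    rw [hval, J_eq]
    -- now pure algebra
    have hG5 : Real.Gamma (5/4) = (1/4) * Real.Gamma (1/4) := by
      rw [show (5/4 : ℝ) = 1/4 + 1 by norm_num, Real.Gamma_add_one (by norm_num)]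
    have hsqrt : Real.sqrt (Real.pi * b * s) = Real.sqrt Real.pi * Real.sqrt (b * s) := by
      rw [mul_assoc, Real.sqrt_mul Real.pi_pos.le]
    have hcbs : c * s⁻¹ = (Real.sqrt (b * s))⁻¹ := by
      have hbs : (0:ℝ) < b * s := by positivity
      have h1 : c * Real.sqrt (b * s) = s := by
        rw [hc, ← Real.sqrt_mul (div_pos hs hb).le,
          show s / b * (b * s) = s ^ 2 by field_simp, Real.sqrt_sq hs.le]
      calc c * s⁻¹ = c * (c * Real.sqrt (b * s))⁻¹ := by rw [h1]
        _ = (Real.sqrt (b * s))⁻¹ := by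
            rw [mul_inv, ← mul_assoc, mul_inv_cancel₀ hc0.ne', one_mul]
    rw [← mul_assoc, hcbs, hG5, hsqrt]
    have h2 : Real.sqrt (b * s) ≠ 0 := by positivity
    have h3 : Real.sqrt Real.pi ≠ 0 := by positivity
    field_simp
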